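/- For all n ≥ 4, the maximum product of edge multiplicities over all (n,4,9)-multigraphs equals 2^(ex(n,{C₃,C₄})), i.e., ex_Π(n,4,9) = 2^(ex(n,{C₃,C₄})). -/

import Mathlib

open Finset

def pairs (n : ℕ) (X : Finset (Fin n)) : Finset (Fin n × Fin n) :=
  (X ×ˢ X).filter (fun p => p.1 < p.2)

def mgS (n : ℕ) (w : Fin n → Fin n → ℕ) (X : Finset (Fin n)) : ℕ :=
  ∑ p ∈ pairs n X, w p.1 p.2

def mgP (n : ℕ) (w : Fin n → Fin n → ℕ) (X : Finset (Fin n)) : ℕ :=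
  ∏ p ∈ pairs n X, w p.1 p.2

def IsNSQ (n s q : ℕ) (w : Fin n → Fin n → ℕ) : Prop :=
  ∀ X : Finset (Fin n), X.card = s → mgS n w X ≤ q

def C3C4Free {n : ℕ} (G : SimpleGraph (Fin n)) : Prop :=
  (∀ x y z : Fin n, G.Adj x y → G.Adj y z → G.Adj x z → False) ∧
  (∀ a b c d : Fin n, a ≠ c → b ≠ d →
    G.Adj a b → G.Adj b c → G.Adj c d → G.Adj d a → False)

noncomputable def exC34 (n : ℕ) : ℕ :=
  sSup {m | ∃ G : SimpleGraph (Fin n), C3C4Free G ∧ m = Nat.card G.edgeSet}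

namespace Aux

lemma mem_pairs {n : ℕ} {X : Finset (Fin n)} {p : Fin n × Fin n} :
    p ∈ pairs n X ↔ p.1 ∈ X ∧ p.2 ∈ X ∧ p.1 < p.2 := by
  simp [pairs, Finset.mem_filter, Finset.mem_product, and_assoc]

def opair {n : ℕ} (a u : Fin n) : Fin n × Fin n := if a < u then (a, u) else (u, a)

lemma opair_fst_or {n : ℕ} (a u : Fin n) : (opair a u).1 = a ∨ (opair a u).2 = a := by
  unfold opair; split <;> simp

lemma opair_other {n : ℕ} {a u : Fin n} (h : u ≠ a) :
    ((opair a u).1 = a ∧ (opair a u).2 = u) ∨ ((opair a u).1 = u ∧ (opair a u).2 = a) := by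
  unfold opair; split <;> simp

lemma pairs_insert {n : ℕ} {a : Fin n} {S : Finset (Fin n)} (ha : a ∉ S) :
    pairs n (insert a S) = pairs n S ∪ S.image (opair a) := by
  ext p
  simp only [mem_pairs, Finset.mem_union, Finset.mem_image, Finset.mem_insert]
  constructor
  · rintro ⟨h1, h2, hlt⟩
    rcases h1 with h1 | h1 <;> rcases h2 with h2 | h2
    · exact absurd hlt (by rw [h1, h2]; exact lt_irrefl _)
    · right
      refine ⟨p.2, h2, ?_⟩
      rw [opair, if_pos (h1 ▸ hlt), ← h1]
    · right
      refine ⟨p.1, h1, ?_⟩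
      rw [opair, if_neg (by rw [h2] at hlt; exact not_lt_of_gt hlt), ← h2]
    · left; exact ⟨h1, h2, hlt⟩
  · rintro (⟨h1, h2, hlt⟩ | ⟨u, hu, rfl⟩)
    · exact ⟨Or.inr h1, Or.inr h2, hlt⟩
    · have hua : u ≠ a := fun h => ha (h ▸ hu)
      rcases lt_or_gt_of_ne hua with h | h
      · rw [opair, if_neg (not_lt_of_gt h)]
        exact ⟨Or.inr hu, Or.inl rfl, h⟩
      · rw [opair, if_pos h]
        exact ⟨Or.inl rfl, Or.inr hu, h⟩

lemma opair_injOn {n : ℕ} {a : Fin n} {S : Finset (Fin n)} (ha : a ∉ S) :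
    Set.InjOn (opair a) S := by
  intro u hu v hv h
  have hu' : u ≠ a := fun hh => ha (hh ▸ hu)
  have hv' : v ≠ a := fun hh => ha (hh ▸ hv)
  have e1 : (opair a u).1 = (opair a v).1 := by rw [h]
  have e2 : (opair a u).2 = (opair a v).2 := by rw [h]
  rcases opair_other (a := a) hu' with ⟨h1, h2⟩ | ⟨h1, h2⟩ <;>
    rcases opair_other (a := a) hv' with ⟨g1, g2⟩ | ⟨g1, g2⟩
  · rw [← h2, e2, g2]
  · exact absurd (by rw [← g1, ← e1, h1]) hv'.symm
  · exact absurd (by rw [← h1, e1, g1]) hu'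
  · rw [← h1, e1, g1]

lemma disj_pairs_image {n : ℕ} {a : Fin n} {S : Finset (Fin n)} (ha : a ∉ S) :
    Disjoint (pairs n S) (S.image (opair a)) := by
  rw [Finset.disjoint_left]
  rintro p hp hq
  rcases Finset.mem_image.mp hq with ⟨u, hu, rfl⟩
  rcases mem_pairs.mp hp with ⟨h1, h2, _⟩
  rcases opair_fst_or a u with h | h
  · exact ha (h ▸ h1)
  · exact ha (h ▸ h2)

lemma mgP_insert {n : ℕ} {w : Fin n → Fin n → ℕ} (hsym : ∀ i j, w i j = w j i)
    {a : Fin n} {S : Finset (Fin n)} (ha : a ∉ S) :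
    mgP n w (insert a S) = (∏ u ∈ S, w a u) * mgP n w S := by
  unfold mgP
  rw [pairs_insert ha, Finset.prod_union (disj_pairs_image ha),
    Finset.prod_image (opair_injOn ha), mul_comm]
  congr 1
  apply Finset.prod_congr rfl
  intro u hu
  have hu' : u ≠ a := fun hh => ha (hh ▸ hu)
  rcases opair_other (a := a) hu' with ⟨h1, h2⟩ | ⟨h1, h2⟩
  · rw [h1, h2]
  · rw [h1, h2, hsym]

lemma mgS_insert {n : ℕ} {w : Fin n → Fin n → ℕ} (hsym : ∀ i j, w i j = w j i)
    {a : Fin n} {S : Finset (Fin n)} (ha : a ∉ S) :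
    mgS n w (insert a S) = (∑ u ∈ S, w a u) + mgS n w S := by
  unfold mgS
  rw [pairs_insert ha, Finset.sum_union (disj_pairs_image ha),
    Finset.sum_image (opair_injOn ha), add_comm]
  congr 1
  apply Finset.sum_congr rfl
  intro u hu
  have hu' : u ≠ a := fun hh => ha (hh ▸ hu)
  rcases opair_other (a := a) hu' with ⟨h1, h2⟩ | ⟨h1, h2⟩
  · rw [h1, h2]
  · rw [h1, h2, hsym]

lemma pairs_singleton {n : ℕ} (a : Fin n) : pairs n {a} = ∅ := by
  ext p
  simp only [mem_pairs, Finset.mem_singleton, Finset.notMem_empty, iff_false]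
  rintro ⟨h1, h2, hlt⟩
  rw [h1, h2] at hlt
  exact lt_irrefl _ hlt

lemma pairs_empty {n : ℕ} : pairs n ∅ = ∅ := by
  ext p; simp [mem_pairs]

lemma mgP_singleton {n : ℕ} (w : Fin n → Fin n → ℕ) (a : Fin n) : mgP n w {a} = 1 := by
  unfold mgP; rw [pairs_singleton]; rfl

lemma mgS_singleton {n : ℕ} (w : Fin n → Fin n → ℕ) (a : Fin n) : mgS n w {a} = 0 := by
  unfold mgS; rw [pairs_singleton]; rfl

-- filter card peeling
lemma fpeel {n : ℕ} {R : Fin n → Fin n → Prop} [DecidableRel R]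
    (hsymR : ∀ u v, R u v ↔ R v u)
    {a : Fin n} {S : Finset (Fin n)} (ha : a ∉ S) :
    ((pairs n (insert a S)).filter (fun p => R p.1 p.2)).card
      = (S.filter (fun u => R a u)).card + ((pairs n S).filter (fun p => R p.1 p.2)).card := by
  rw [pairs_insert ha, Finset.filter_union,
    Finset.card_union_of_disjoint (Finset.disjoint_filter_filter (disj_pairs_image ha)),
    Finset.filter_image, Finset.card_image_of_injOn
      ((opair_injOn ha).mono (Finset.coe_subset.mpr (Finset.filter_subset _ _))), add_comm]
  congr 1
  apply congrArg
  apply Finset.filter_congr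
  intro u hu
  have hu' : u ≠ a := fun hh => ha (hh ▸ hu)
  rcases opair_other (a := a) hu' with ⟨h1, h2⟩ | ⟨h1, h2⟩
  · rw [h1, h2]
  · rw [h1, h2]; exact hsymR u a



noncomputable def cnt (P : Prop) : ℕ := @ite _ P (Classical.propDecidable P) 1 0

lemma cnt_pos {P : Prop} (h : P) : cnt P = 1 := by unfold cnt; exact if_pos h
lemma cnt_neg {P : Prop} (h : ¬P) : cnt P = 0 := by unfold cnt; exact if_neg h
lemma cnt_le_one (P : Prop) : cnt P ≤ 1 := by
  by_cases h : P
  · rw [cnt_pos h]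
  · rw [cnt_neg h]; omega
lemma cnt_congr {P Q : Prop} (h : P ↔ Q) : cnt P = cnt Q := by
  by_cases hp : P
  · rw [cnt_pos hp, cnt_pos (h.mp hp)]
  · rw [cnt_neg hp, cnt_neg (fun q => hp (h.mpr q))]
lemma not_of_cnt_eq_zero {P : Prop} (h : cnt P = 0) : ¬P := by
  intro hp; rw [cnt_pos hp] at h; omega

-- the boolean lemma
lemma bool6 (e1 e2 e3 e4 e5 e6 : Bool)
    (h : 4 ≤ (cond e1 1 0 : ℕ) + cond e2 1 0 + cond e3 1 0 + cond e4 1 0 + cond e5 1 0 + cond e6 1 0) :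
    (e1 ∧ e2 ∧ e4) ∨ (e1 ∧ e3 ∧ e5) ∨ (e2 ∧ e3 ∧ e6) ∨ (e4 ∧ e5 ∧ e6) ∨
    (e1 ∧ e4 ∧ e6 ∧ e3) ∨ (e1 ∧ e5 ∧ e6 ∧ e2) ∨ (e2 ∧ e4 ∧ e5 ∧ e3) := by
  revert h
  cases e1 <;> cases e2 <;> cases e3 <;> cases e4 <;> cases e5 <;> cases e6 <;> decide

lemma cnt_to_cond {P : Prop} :
    ∃ b : Bool, cnt P = cond b 1 0 ∧ (b → P) := by
  by_cases h : P
  · exact ⟨true, by rw [cnt_pos h]; rfl, fun _ => h⟩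
  · exact ⟨false, by rw [cnt_neg h]; rfl, fun hb => by simp at hb⟩

/-- From `C3C4Free`, every 4 distinct vertices span at most 3 edges. -/
lemma loc34_of_free {n : ℕ} {G : SimpleGraph (Fin n)} (hG : C3C4Free G)
    (a b c d : Fin n) (hab : a ≠ b) (hac : a ≠ c) (had : a ≠ d)
    (hbc : b ≠ c) (hbd : b ≠ d) (hcd : c ≠ d) :
    cnt (G.Adj a b) + cnt (G.Adj a c) + cnt (G.Adj a d) + cnt (G.Adj b c)
      + cnt (G.Adj b d) + cnt (G.Adj c d) ≤ 3 := by
  by_contra hcon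
  push_neg at hcon
  obtain ⟨b1, e1, p1⟩ := cnt_to_cond (P := G.Adj a b)
  obtain ⟨b2, e2, p2⟩ := cnt_to_cond (P := G.Adj a c)
  obtain ⟨b3, e3, p3⟩ := cnt_to_cond (P := G.Adj a d)
  obtain ⟨b4, e4, p4⟩ := cnt_to_cond (P := G.Adj b c)
  obtain ⟨b5, e5, p5⟩ := cnt_to_cond (P := G.Adj b d)
  obtain ⟨b6, e6, p6⟩ := cnt_to_cond (P := G.Adj c d)
  rw [e1, e2, e3, e4, e5, e6] at hcon
  rcases bool6 b1 b2 b3 b4 b5 b6 (by omega) with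
    ⟨h1, h2, h3⟩ | ⟨h1, h2, h3⟩ | ⟨h1, h2, h3⟩ | ⟨h1, h2, h3⟩ |
    ⟨h1, h2, h3, h4⟩ | ⟨h1, h2, h3, h4⟩ | ⟨h1, h2, h3, h4⟩
  · exact hG.1 a b c (p1 h1) (p4 h3) (p2 h2)
  · exact hG.1 a b d (p1 h1) (p5 h3) (p3 h2)
  · exact hG.1 a c d (p2 h1) (p6 h3) (p3 h2)
  · exact hG.1 b c d (p4 h1) (p6 h3) (p5 h2)
  · exact hG.2 a b c d hac hbd (p1 h1) (p4 h2) (p6 h3) ((p3 h4).symm)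
  · exact hG.2 a b d c had hbc (p1 h1) (p5 h2) ((p6 h3).symm) ((p2 h4).symm)
  · exact hG.2 a c b d hab hcd (p2 h1) ((p4 h2).symm) (p5 h3) ((p3 h4).symm)




/-- Counting edges of a simple graph by ordered pairs with `p.1 < p.2`. -/
lemma cntlem {k : ℕ} (G : SimpleGraph (Fin k)) [DecidableRel G.Adj] :
    Nat.card G.edgeSet = ((pairs k univ).filter (fun p => G.Adj p.1 p.2)).card := by
  rw [Nat.card_eq_card_toFinset]
  symm
  apply Finset.card_bij (fun p _ => s(p.1, p.2))
  · intro p hp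
    rw [Finset.mem_filter] at hp
    simp only [Set.mem_toFinset, SimpleGraph.mem_edgeSet]
    exact hp.2
  · intro p hp q hq h
    rw [Finset.mem_filter] at hp hq
    have hp' := mem_pairs.mp hp.1
    have hq' := mem_pairs.mp hq.1
    rcases Sym2.eq_iff.mp h with ⟨h1, h2⟩ | ⟨h1, h2⟩
    · exact Prod.ext h1 h2
    · exfalso
      have := hp'.2.2
      rw [h1, h2] at this
      exact absurd (this.trans hq'.2.2) (lt_irrefl _)
  · intro e he
    simp only [Set.mem_toFinset, SimpleGraph.mem_edgeSet] at he
    induction e with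
    | _ u v =>
      rcases lt_trichotomy u v with h | h | h
      · exact ⟨(u, v), Finset.mem_filter.mpr ⟨mem_pairs.mpr ⟨mem_univ _, mem_univ _, h⟩, he⟩, rfl⟩
      · exact absurd h (G.ne_of_adj he)
      · exact ⟨(v, u), Finset.mem_filter.mpr
          ⟨mem_pairs.mpr ⟨mem_univ _, mem_univ _, h⟩, he.symm⟩, Sym2.eq_swap⟩

/-- transfer of filtered pair counts along an order embedding -/
lemma transfer {m n : ℕ} (f : Fin m ↪o Fin n) (R : Fin n → Fin n → Prop)
    [DecidableRel R] :
    ((pairs n ((univ : Finset (Fin m)).map f.toEmbedding)).filter (fun p => R p.1 p.2)).card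
      = ((pairs m univ).filter (fun p => R (f p.1) (f p.2))).card := by
  symm
  apply Finset.card_bij (fun p _ => ((f p.1 : Fin n), (f p.2 : Fin n)))
  · intro p hp
    rw [Finset.mem_filter] at hp ⊢
    have hp' := mem_pairs.mp hp.1
    exact ⟨mem_pairs.mpr ⟨Finset.mem_map_of_mem _ (mem_univ _),
      Finset.mem_map_of_mem _ (mem_univ _), f.strictMono hp'.2.2⟩, hp.2⟩
  · intro p hp q hq h
    have h1 : f p.1 = f q.1 := congrArg Prod.fst h
    have h2 : f p.2 = f q.2 := congrArg Prod.snd h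
    exact Prod.ext (f.injective h1) (f.injective h2)
  · intro q hq
    rw [Finset.mem_filter] at hq
    have hq' := mem_pairs.mp hq.1
    obtain ⟨i, _, hi⟩ := Finset.mem_map.mp hq'.1
    obtain ⟨j, _, hj⟩ := Finset.mem_map.mp hq'.2.1
    have hij : i < j := by
      have := hq'.2.2
      rw [← hi, ← hj] at this
      exact f.lt_iff_lt.mp this
    have hi' : (f i : Fin n) = q.1 := hi
    have hj' : (f j : Fin n) = q.2 := hj
    refine ⟨(i, j), Finset.mem_filter.mpr ⟨mem_pairs.mpr ⟨mem_univ _, mem_univ _, hij⟩, ?_⟩, ?_⟩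
    · show R (f i) (f j)
      rw [hi', hj']; exact hq.2
    · show ((f i : Fin n), (f j : Fin n)) = q
      rw [hi', hj']


-- FRAGMENT (appended inside namespace Aux)

def Loc34 {k : ℕ} (G : SimpleGraph (Fin k)) : Prop :=
  ∀ a b c d : Fin k, a ≠ b → a ≠ c → a ≠ d → b ≠ c → b ≠ d → c ≠ d →
    cnt (G.Adj a b) + cnt (G.Adj a c) + cnt (G.Adj a d) + cnt (G.Adj b c)
      + cnt (G.Adj b d) + cnt (G.Adj c d) ≤ 3

noncomputable def exT (k : ℕ) : ℕ :=
  sSup {m | ∃ G : SimpleGraph (Fin k), Loc34 G ∧ m = Nat.card G.edgeSet}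

lemma card_le_pairs {k : ℕ} (G : SimpleGraph (Fin k)) :
    Nat.card G.edgeSet ≤ (pairs k univ).card := by
  letI := Classical.decRel G.Adj
  rw [cntlem]
  exact Finset.card_filter_le _ _

lemma loc34_bot {k : ℕ} : Loc34 (⊥ : SimpleGraph (Fin k)) := by
  intro a b c d _ _ _ _ _ _
  have h : ∀ u v : Fin k, cnt ((⊥ : SimpleGraph (Fin k)).Adj u v) = 0 :=
    fun u v => cnt_neg (by simp)
  simp only [h]; omega

lemma free_bot {k : ℕ} : C3C4Free (⊥ : SimpleGraph (Fin k)) := by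
  constructor
  · intro x y z h
    simp at h
  · intro a b c d _ _ h
    simp at h

lemma card_bot {k : ℕ} : Nat.card (⊥ : SimpleGraph (Fin k)).edgeSet = 0 := by
  simp [SimpleGraph.edgeSet_bot]

lemma bddT (k : ℕ) : BddAbove {m | ∃ G : SimpleGraph (Fin k), Loc34 G ∧ m = Nat.card G.edgeSet} := by
  refine ⟨(pairs k univ).card, ?_⟩
  rintro m ⟨G, _, rfl⟩
  exact card_le_pairs G

lemma bddC (k : ℕ) : BddAbove {m | ∃ G : SimpleGraph (Fin k), C3C4Free G ∧ m = Nat.card G.edgeSet} := by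
  refine ⟨(pairs k univ).card, ?_⟩
  rintro m ⟨G, _, rfl⟩
  exact card_le_pairs G

lemma nonemptyT (k : ℕ) :
    {m | ∃ G : SimpleGraph (Fin k), Loc34 G ∧ m = Nat.card G.edgeSet}.Nonempty :=
  ⟨0, ⊥, loc34_bot, card_bot.symm⟩

lemma nonemptyC (k : ℕ) :
    {m | ∃ G : SimpleGraph (Fin k), C3C4Free G ∧ m = Nat.card G.edgeSet}.Nonempty :=
  ⟨0, ⊥, free_bot, card_bot.symm⟩

lemma exT_le_pairs (k : ℕ) : exT k ≤ (pairs k univ).card :=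
  csSup_le (nonemptyT k) (by rintro m ⟨G, _, rfl⟩; exact card_le_pairs G)

lemma exT_mem (k : ℕ) :
    exT k ∈ {m | ∃ G : SimpleGraph (Fin k), Loc34 G ∧ m = Nat.card G.edgeSet} :=
  Nat.sSup_mem (nonemptyT k) (bddT k)

lemma exC34_mem (k : ℕ) :
    exC34 k ∈ {m | ∃ G : SimpleGraph (Fin k), C3C4Free G ∧ m = Nat.card G.edgeSet} :=
  Nat.sSup_mem (nonemptyC k) (bddC k)

lemma le_exT {k : ℕ} {G : SimpleGraph (Fin k)} (h : Loc34 G) : Nat.card G.edgeSet ≤ exT k :=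
  le_csSup (bddT k) ⟨G, h, rfl⟩

lemma le_exC34 {k : ℕ} {G : SimpleGraph (Fin k)} (h : C3C4Free G) :
    Nat.card G.edgeSet ≤ exC34 k :=
  le_csSup (bddC k) ⟨G, h, rfl⟩

/-- transport of a locally sparse symmetric relation on a `k`-subset to `exT k`. -/
lemma card_transport {n k : ℕ} (S : Finset (Fin n)) (hS : S.card = k)
    (R : Fin n → Fin n → Prop) [DecidableRel R] (hsymR : ∀ u v, R u v ↔ R v u)
    (HYP : ∀ a b c d : Fin n, a ∈ S → b ∈ S → c ∈ S → d ∈ S →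
      a ≠ b → a ≠ c → a ≠ d → b ≠ c → b ≠ d → c ≠ d →
      cnt (R a b) + cnt (R a c) + cnt (R a d) + cnt (R b c) + cnt (R b d) + cnt (R c d) ≤ 3) :
    ((pairs n S).filter (fun p => R p.1 p.2)).card ≤ exT k := by
  set f := S.orderEmbOfFin hS with hf
  have hmem : ∀ i, f i ∈ S := fun i => Finset.orderEmbOfFin_mem S hS i
  have hSeq : S = (univ : Finset (Fin k)).map f.toEmbedding := by
    ext x
    simp only [Finset.mem_map, mem_univ, true_and]
    constructor
    · intro hx
      have hx' : x ∈ Set.range f := by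
        rw [hf, Finset.range_orderEmbOfFin]
        exact hx
      obtain ⟨i, hi⟩ := hx'
      exact ⟨i, hi⟩
    · rintro ⟨i, rfl⟩
      exact hmem i
  set G' : SimpleGraph (Fin k) :=
    { Adj := fun i j => i ≠ j ∧ R (f i) (f j)
      symm := ⟨fun i j h => ⟨h.1.symm, (hsymR _ _).mp h.2⟩⟩
      loopless := ⟨fun i h => h.1 rfl⟩ } with hG'
  letI : DecidableRel G'.Adj := fun i j => instDecidableAnd
  have hloc : Loc34 G' := by
    intro a b c d hab hac had hbc hbd hcd
    have e : ∀ (u v : Fin k), u ≠ v → cnt (G'.Adj u v) = cnt (R (f u) (f v)) := by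
      intro u v huv
      exact cnt_congr ⟨fun h => h.2, fun h => ⟨huv, h⟩⟩
    rw [e a b hab, e a c hac, e a d had, e b c hbc, e b d hbd, e c d hcd]
    exact HYP (f a) (f b) (f c) (f d) (hmem a) (hmem b) (hmem c) (hmem d)
      (f.injective.ne hab) (f.injective.ne hac) (f.injective.ne had)
      (f.injective.ne hbc) (f.injective.ne hbd) (f.injective.ne hcd)
  calc ((pairs n S).filter (fun p => R p.1 p.2)).card
      = ((pairs k univ).filter (fun p => R (f p.1) (f p.2))).card := by
        rw [hSeq]; exact transfer f R
    _ = ((pairs k univ).filter (fun p => G'.Adj p.1 p.2)).card := by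
        apply congrArg
        apply Finset.filter_congr
        intro p hp
        have hne : p.1 ≠ p.2 := ne_of_lt (mem_pairs.mp hp).2.2
        exact ⟨fun h => ⟨hne, h⟩, fun h => h.2⟩
    _ = Nat.card G'.edgeSet := (cntlem G').symm
    _ ≤ exT k := le_exT hloc

lemma exC34_succ (k : ℕ) (hk : 1 ≤ k) : exC34 k + 1 ≤ exC34 (k + 1) := by
  obtain ⟨G, hGfree, hGcard⟩ := exC34_mem k
  letI := Classical.decRel G.Adj
  set f : Fin k ↪o Fin (k + 1) := OrderEmbedding.ofStrictMono Fin.castSucc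
    (fun i j h => Fin.castSucc_lt_castSucc_iff.mpr h) with hfdef
  set L : Fin (k + 1) := Fin.last k with hL
  set vz : Fin (k + 1) := f ⟨0, hk⟩ with hvz
  have hfne : ∀ i, f i ≠ L := fun i => Fin.ne_last_of_lt (Fin.castSucc_lt_last i)
  have hvzne : vz ≠ L := hfne _
  set G' : SimpleGraph (Fin (k + 1)) :=
    { Adj := fun a b => (∃ i j, G.Adj i j ∧ a = f i ∧ b = f j) ∨ (a = L ∧ b = vz) ∨ (b = L ∧ a = vz)
      symm := by
        constructor
        rintro a b (⟨i, j, h, rfl, rfl⟩ | ⟨h1, h2⟩ | ⟨h1, h2⟩)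
        · exact Or.inl ⟨j, i, h.symm, rfl, rfl⟩
        · exact Or.inr (Or.inr ⟨h1, h2⟩)
        · exact Or.inr (Or.inl ⟨h1, h2⟩)
      loopless := by
        constructor
        rintro a (⟨i, j, h, rfl, he⟩ | ⟨h1, h2⟩ | ⟨h1, h2⟩)
        · exact G.loopless.irrefl i (by rwa [← f.injective he] at h)
        · exact hvzne (h2.symm.trans h1)
        · exact hvzne (h2.symm.trans h1) } with hG'
  have adj_last : ∀ {b}, G'.Adj L b → b = vz := by
    rintro b (⟨i, j, h, he, rfl⟩ | ⟨h1, h2⟩ | ⟨h1, h2⟩)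
    · exact absurd he.symm (hfne i)
    · exact h2
    · exact absurd h2.symm hvzne
  have adj_last' : ∀ {b}, G'.Adj b L → b = vz := fun h => adj_last (G'.adj_symm h)
  have adj_nonlast : ∀ {a b}, a ≠ L → b ≠ L → G'.Adj a b →
      ∃ i j, G.Adj i j ∧ a = f i ∧ b = f j := by
    rintro a b ha hb (⟨i, j, h, e1, e2⟩ | ⟨h1, h2⟩ | ⟨h1, h2⟩)
    · exact ⟨i, j, h, e1, e2⟩
    · exact absurd h1 ha
    · exact absurd h1 hb
  have hfree' : C3C4Free G' := by
    constructor
    · intro x y z hxy hyz hxz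
      by_cases hx : x = L
      · subst hx
        have h1 := adj_last hxy
        have h2 := adj_last hxz
        rw [h1, h2] at hyz
        exact G'.loopless.irrefl _ hyz
      by_cases hy : y = L
      · have h1 := adj_last' (hy ▸ hxy)
        have h2 := adj_last (hy ▸ hyz)
        rw [h1, h2] at hxz
        exact G'.loopless.irrefl _ hxz
      by_cases hz : z = L
      · have h1 := adj_last' (hz ▸ hyz)
        have h2 := adj_last' (hz ▸ hxz)
        rw [h1, h2] at hxy
        exact G'.loopless.irrefl _ hxy
      obtain ⟨i1, j1, g1, e1, e2⟩ := adj_nonlast hx hy hxy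
      obtain ⟨i2, j2, g2, e3, e4⟩ := adj_nonlast hy hz hyz
      obtain ⟨i3, j3, g3, e5, e6⟩ := adj_nonlast hx hz hxz
      have q1 : i2 = j1 := f.injective (e3.symm.trans e2)
      have q2 : i3 = i1 := f.injective (e5.symm.trans e1)
      have q3 : j3 = j2 := f.injective (e6.symm.trans e4)
      rw [q1] at g2
      rw [q2, q3] at g3
      exact hGfree.1 i1 j1 j2 g1 g2 g3
    · intro a b c d hac hbd h1 h2 h3 h4
      by_cases ha : a = L
      · subst ha
        exact hbd ((adj_last h1).trans (adj_last' h4).symm)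
      by_cases hb : b = L
      · exact hac ((adj_last' (hb ▸ h1)).trans (adj_last (hb ▸ h2)).symm)
      by_cases hc : c = L
      · exact hbd ((adj_last' (hc ▸ h2)).trans (adj_last (hc ▸ h3)).symm)
      by_cases hd : d = L
      · exact hac ((adj_last (hd ▸ h4)).trans (adj_last' (hd ▸ h3)).symm)
      obtain ⟨i1, j1, g1, e1, e2⟩ := adj_nonlast ha hb h1
      obtain ⟨i2, j2, g2, e3, e4⟩ := adj_nonlast hb hc h2
      obtain ⟨i3, j3, g3, e5, e6⟩ := adj_nonlast hc hd h3
      obtain ⟨i4, j4, g4, e7, e8⟩ := adj_nonlast hd ha h4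
      have q1 : i2 = j1 := f.injective (e3.symm.trans e2)
      have q2 : i3 = j2 := f.injective (e5.symm.trans e4)
      have q3 : i4 = j3 := f.injective (e7.symm.trans e6)
      have q4 : j4 = i1 := f.injective (e8.symm.trans e1)
      rw [q1] at g2
      rw [q2] at g3
      rw [q3, q4] at g4
      refine hGfree.2 i1 j1 j2 j3 ?_ ?_ g1 g2 g3 g4
      · intro h; exact hac (by rw [e1, e5, q2, h])
      · intro h; exact hbd (by rw [e2, e7, q3, h])
  letI : DecidableRel G'.Adj := Classical.decRel _
  have huniv : (univ : Finset (Fin (k + 1)))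
      = insert L ((univ : Finset (Fin k)).map f.toEmbedding) := by
    ext x
    simp only [mem_univ, true_iff, mem_insert, Finset.mem_map, mem_univ, true_and]
    by_cases hx : x = L
    · exact Or.inl hx
    · right
      obtain ⟨j, hj⟩ := Fin.exists_castSucc_eq.mpr hx
      exact ⟨j, hj⟩
  have hLnot : L ∉ (univ : Finset (Fin k)).map f.toEmbedding := by
    simp only [Finset.mem_map, mem_univ, true_and]
    rintro ⟨i, hi⟩
    exact hfne i hi
  have hsymG' : ∀ u v : Fin (k + 1), G'.Adj u v ↔ G'.Adj v u := fun u v => G'.adj_comm u v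
  have hcount : Nat.card G'.edgeSet = Nat.card G.edgeSet + 1 := by
    rw [cntlem G', huniv, fpeel hsymG' hLnot]
    have hfil : (((univ : Finset (Fin k)).map f.toEmbedding).filter (fun u => G'.Adj L u)).card
        = 1 := by
      have he : ((univ : Finset (Fin k)).map f.toEmbedding).filter (fun u => G'.Adj L u)
          = ((univ : Finset (Fin k)).map f.toEmbedding).filter (fun u => u = vz) := by
        apply Finset.filter_congr
        intro u _
        constructor
        · exact fun h => adj_last h
        · rintro rfl
          exact Or.inr (Or.inl ⟨rfl, rfl⟩)
      have hmem : vz ∈ (univ : Finset (Fin k)).map f.toEmbedding :=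
        Finset.mem_map_of_mem _ (mem_univ _)
      rw [he, Finset.filter_eq', if_pos hmem]
      exact Finset.card_singleton _
    have htr : ((pairs (k+1) ((univ : Finset (Fin k)).map f.toEmbedding)).filter
        (fun p => G'.Adj p.1 p.2)).card = Nat.card G.edgeSet := by
      rw [transfer f G'.Adj, cntlem G]
      apply congrArg
      apply Finset.filter_congr
      intro p _
      constructor
      · rintro (⟨i, j, h, he1, he2⟩ | ⟨h1, _⟩ | ⟨h1, _⟩)
        · rwa [f.injective he1, f.injective he2]
        · exact absurd h1 (hfne _)
        · exact absurd h1 (hfne _)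
      · intro h
        exact Or.inl ⟨p.1, p.2, h, rfl, rfl⟩
    rw [hfil, htr]
    omega
  have hle : Nat.card G'.edgeSet ≤ exC34 (k + 1) := le_exC34 hfree'
  omega

def adj5 (i j : Fin 5) : Prop :=
  i ≠ j ∧ ((j : ℕ) = ((i : ℕ) + 1) % 5 ∨ (i : ℕ) = ((j : ℕ) + 1) % 5)

instance : DecidableRel adj5 := fun _ _ => instDecidableAnd

def G5 : SimpleGraph (Fin 5) :=
  { Adj := adj5
    symm := ⟨fun _ _ h => ⟨h.1.symm, h.2.symm⟩⟩
    loopless := ⟨fun _ h => h.1 rfl⟩ }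

instance : DecidableRel G5.Adj := fun i j => inferInstanceAs (Decidable (adj5 i j))

lemma free5 : C3C4Free G5 := ⟨by decide, by decide⟩

lemma card5 : Nat.card G5.edgeSet = 5 := by rw [cntlem G5]; decide

lemma exC34_5 : 5 ≤ exC34 5 := by have := le_exC34 free5; rwa [card5] at this

def adj6 (i j : Fin 6) : Prop :=
  i ≠ j ∧ ((j : ℕ) = ((i : ℕ) + 1) % 6 ∨ (i : ℕ) = ((j : ℕ) + 1) % 6)

instance : DecidableRel adj6 := fun _ _ => instDecidableAnd

def G6 : SimpleGraph (Fin 6) :=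
  { Adj := adj6
    symm := ⟨fun _ _ h => ⟨h.1.symm, h.2.symm⟩⟩
    loopless := ⟨fun _ h => h.1 rfl⟩ }

instance : DecidableRel G6.Adj := fun i j => inferInstanceAs (Decidable (adj6 i j))

lemma free6 : C3C4Free G6 := ⟨by decide, by decide⟩

lemma card6 : Nat.card G6.edgeSet = 6 := by rw [cntlem G6]; decide

lemma exC34_6 : 6 ≤ exC34 6 := by have := le_exC34 free6; rwa [card6] at this

lemma exC34_add (k : ℕ) (hk : 1 ≤ k) : ∀ t, exC34 k + t ≤ exC34 (k + t) := by
  intro t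
  induction t with
  | zero => exact le_refl _
  | succ t ih =>
    have h2 := exC34_succ (k + t) (by omega)
    have : k + (t + 1) = (k + t) + 1 := by omega
    rw [this]
    omega

lemma exC34_ge_pred (k : ℕ) (hk : 1 ≤ k) : k - 1 ≤ exC34 k := by
  have h := exC34_add 1 (le_refl 1) (k - 1)
  have h1 : 1 + (k - 1) = k := by omega
  rw [h1] at h
  omega

lemma exC34_ge_self (k : ℕ) (hk : 5 ≤ k) : k ≤ exC34 k := by
  by_cases h : k = 5
  · subst h; exact exC34_5
  · have h6 := exC34_add 6 (by omega) (k - 6)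
    have h1 : 6 + (k - 6) = k := by omega
    rw [h1] at h6
    have := exC34_6
    omega

lemma exT_cases (k : ℕ) (hk : 4 ≤ k) : exT k ≤ exC34 k ∨ exT k ≤ 3 + exT (k - 3) := by
  obtain ⟨G, hGl, hGe⟩ := exT_mem k
  letI := Classical.decRel G.Adj
  by_cases htri : ∃ x y z : Fin k, G.Adj x y ∧ G.Adj y z ∧ G.Adj x z
  · right
    obtain ⟨x, y, z, hxy, hyz, hxz⟩ := htri
    have hxyne : x ≠ y := G.ne_of_adj hxy
    have hyzne : y ≠ z := G.ne_of_adj hyz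
    have hxzne : x ≠ z := G.ne_of_adj hxz
    have iso : ∀ u : Fin k, u ≠ x → u ≠ y → u ≠ z →
        ¬G.Adj x u ∧ ¬G.Adj y u ∧ ¬G.Adj z u := by
      intro u h1 h2 h3
      have hl := hGl x y z u hxyne hxzne h1.symm hyzne h2.symm h3.symm
      rw [cnt_pos hxy, cnt_pos hxz, cnt_pos hyz] at hl
      have c1 := cnt_le_one (G.Adj x u)
      have c2 := cnt_le_one (G.Adj y u)
      have c3 := cnt_le_one (G.Adj z u)
      exact ⟨not_of_cnt_eq_zero (by omega), not_of_cnt_eq_zero (by omega),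
        not_of_cnt_eq_zero (by omega)⟩
    set S' : Finset (Fin k) := univ \ {x, y, z} with hS'
    have hmemS' : ∀ u, u ∈ S' ↔ u ≠ x ∧ u ≠ y ∧ u ≠ z := by
      intro u
      simp [hS', Finset.mem_sdiff, Finset.mem_insert]
    have hxS' : x ∉ S' := fun h => ((hmemS' x).mp h).1 rfl
    have hyS' : y ∉ S' := fun h => ((hmemS' y).mp h).2.1 rfl
    have hzS' : z ∉ S' := fun h => ((hmemS' z).mp h).2.2 rfl
    have hcardS' : S'.card = k - 3 := by
      rw [hS', Finset.card_sdiff_of_subset (Finset.subset_univ _)]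
      have : ({x, y, z} : Finset (Fin k)).card = 3 := by
        rw [Finset.card_insert_of_notMem (by simp [hxyne, hxzne]),
          Finset.card_insert_of_notMem (by simp [hyzne]), Finset.card_singleton]
      rw [this, Finset.card_univ, Fintype.card_fin]
    have huniv : (univ : Finset (Fin k)) = insert x (insert y (insert z S')) := by
      ext u
      simp only [mem_univ, true_iff, Finset.mem_insert, hmemS']
      by_cases h1 : u = x
      · exact Or.inl h1
      by_cases h2 : u = y
      · exact Or.inr (Or.inl h2)
      by_cases h3 : u = z
      · exact Or.inr (Or.inr (Or.inl h3))
      exact Or.inr (Or.inr (Or.inr ⟨h1, h2, h3⟩))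
    have hsymA : ∀ u v : Fin k, G.Adj u v ↔ G.Adj v u := fun u v => G.adj_comm u v
    have hx1 : x ∉ insert y (insert z S') := by
      simp only [Finset.mem_insert]
      push_neg
      exact ⟨hxyne, hxzne, hxS'⟩
    have hy1 : y ∉ insert z S' := by
      simp only [Finset.mem_insert]
      push_neg
      exact ⟨hyzne, hyS'⟩
    have hcnt := cntlem G
    rw [huniv, fpeel hsymA hx1, fpeel hsymA hy1, fpeel hsymA hzS'] at hcnt
    have e1 : ((insert y (insert z S')).filter (fun u => G.Adj x u)).card = 2 := by
      have hemp : S'.filter (fun u => G.Adj x u) = ∅ := by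
        apply Finset.filter_false_of_mem
        intro u hu
        obtain ⟨h1, h2, h3⟩ := (hmemS' u).mp hu
        exact (iso u h1 h2 h3).1
      rw [Finset.filter_insert, if_pos hxy, Finset.filter_insert, if_pos hxz, hemp]
      rw [Finset.card_insert_of_notMem (by simp [hyzne]), Finset.card_insert_of_notMem (by simp),
        Finset.card_empty]
    have e2 : ((insert z S').filter (fun u => G.Adj y u)).card = 1 := by
      have hemp : S'.filter (fun u => G.Adj y u) = ∅ := by
        apply Finset.filter_false_of_mem
        intro u hu
        obtain ⟨h1, h2, h3⟩ := (hmemS' u).mp hu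
        exact (iso u h1 h2 h3).2.1
      rw [Finset.filter_insert, if_pos hyz, hemp]
      rw [Finset.card_insert_of_notMem (by simp), Finset.card_empty]
    have e3 : (S'.filter (fun u => G.Adj z u)).card = 0 := by
      have hemp : S'.filter (fun u => G.Adj z u) = ∅ := by
        apply Finset.filter_false_of_mem
        intro u hu
        obtain ⟨h1, h2, h3⟩ := (hmemS' u).mp hu
        exact (iso u h1 h2 h3).2.2
      rw [hemp, Finset.card_empty]
    have e4 : ((pairs k S').filter (fun p => G.Adj p.1 p.2)).card ≤ exT (k - 3) := by
      apply card_transport S' hcardS' G.Adj hsymA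
      intro a b c d _ _ _ _ hab hac had hbc hbd hcd
      exact hGl a b c d hab hac had hbc hbd hcd
    rw [e1, e2, e3] at hcnt
    omega
  · left
    have hfree : C3C4Free G := by
      constructor
      · intro a b c h1 h2 h3
        exact htri ⟨a, b, c, h1, h2, h3⟩
      · intro a b c d hac hbd h1 h2 h3 h4
        have hab : a ≠ b := G.ne_of_adj h1
        have hbc : b ≠ c := G.ne_of_adj h2
        have hcd : c ≠ d := G.ne_of_adj h3
        have hda : d ≠ a := G.ne_of_adj h4
        have hl := hGl a b c d hab hac (Ne.symm hda) hbc hbd hcd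
        rw [cnt_pos h1, cnt_pos h2, cnt_pos h3, cnt_pos (G.adj_symm h4)] at hl
        omega
    rw [hGe]
    exact le_exC34 hfree

lemma exT_le (k : ℕ) (hk : 4 ≤ k) : exT k ≤ exC34 k := by
  induction k using Nat.strong_induction_on with
  | _ k IH =>
    rcases exT_cases k hk with h | h
    · exact h
    have hk4 : k = 4 ∨ k = 5 ∨ k = 6 ∨ 7 ≤ k := by omega
    rcases hk4 with rfl | rfl | rfl | hk7
    · rw [show (4:ℕ) - 3 = 1 from rfl] at h
      have h1 : exT 1 ≤ (pairs 1 univ).card := exT_le_pairs 1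
      have h2 : (pairs 1 univ).card = 0 := by decide
      have h3 : (3 : ℕ) ≤ exC34 4 := by
        have := exC34_ge_pred 4 (by omega)
        omega
      omega
    · rw [show (5:ℕ) - 3 = 2 from rfl] at h
      have h1 : exT 2 ≤ (pairs 2 univ).card := exT_le_pairs 2
      have h2 : (pairs 2 univ).card = 1 := by decide
      have h3 : (4 : ℕ) ≤ exC34 5 := by
        have := exC34_ge_pred 5 (by omega)
        omega
      omega
    · rw [show (6:ℕ) - 3 = 3 from rfl] at h
      have h1 : exT 3 ≤ (pairs 3 univ).card := exT_le_pairs 3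
      have h2 : (pairs 3 univ).card = 3 := by decide
      have h3 : (6 : ℕ) ≤ exC34 6 := exC34_6
      omega
    · have h1 : exT (k - 3) ≤ exC34 (k - 3) := IH (k - 3) (by omega) (by omega)
      have h2 := exC34_add (k - 3) (by omega) 3
      have h3 : k - 3 + 3 = k := by omega
      rw [h3] at h2
      omega

lemma le_two_pow_pred {a : ℕ} (h : 1 ≤ a) : a ≤ 2 ^ (a - 1) := by
  have h2 := Nat.lt_two_pow_self (n := a - 1)
  omega

lemma six_bound {p q r s t u : ℕ} (hp : 1 ≤ p) (hq : 1 ≤ q) (hr : 1 ≤ r) (hs : 1 ≤ s)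
    (ht : 1 ≤ t) (hu : 1 ≤ u) (hsum : p + q + r + s + t + u ≤ 9) :
    p * q * r * s * t * u ≤ 8 := by
  calc p * q * r * s * t * u
      ≤ 2 ^ (p - 1) * 2 ^ (q - 1) * 2 ^ (r - 1) * 2 ^ (s - 1) * 2 ^ (t - 1) * 2 ^ (u - 1) := by
        exact Nat.mul_le_mul (Nat.mul_le_mul (Nat.mul_le_mul (Nat.mul_le_mul
          (Nat.mul_le_mul (le_two_pow_pred hp) (le_two_pow_pred hq)) (le_two_pow_pred hr))
          (le_two_pow_pred hs)) (le_two_pow_pred ht)) (le_two_pow_pred hu)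
    _ = 2 ^ ((p - 1) + (q - 1) + (r - 1) + (s - 1) + (t - 1) + (u - 1)) := by
        rw [← pow_add, ← pow_add, ← pow_add, ← pow_add, ← pow_add]
    _ ≤ 2 ^ 3 := Nat.pow_le_pow_right (by omega) (by omega)
    _ = 8 := rfl

lemma mgS_pair {n : ℕ} {w : Fin n → Fin n → ℕ} (hsym : ∀ i j, w i j = w j i)
    {a b : Fin n} (h : a ≠ b) : mgS n w {a, b} = w a b := by
  rw [mgS_insert hsym (by simp [h]), mgS_singleton]
  simp

lemma mgP_pair {n : ℕ} {w : Fin n → Fin n → ℕ} (hsym : ∀ i j, w i j = w j i)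
    {a b : Fin n} (h : a ≠ b) : mgP n w {a, b} = w a b := by
  rw [mgP_insert hsym (by simp [h]), mgP_singleton]
  simp

lemma mgP_triple {n : ℕ} {w : Fin n → Fin n → ℕ} (hsym : ∀ i j, w i j = w j i)
    {a b c : Fin n} (hab : a ≠ b) (hac : a ≠ c) (hbc : b ≠ c) :
    mgP n w {a, b, c} = (w a b * w a c) * w b c := by
  rw [mgP_insert hsym (by simp [hab, hac]), mgP_pair hsym hbc,
    Finset.prod_insert (by simp [hbc]), Finset.prod_singleton]

lemma sum9 {n : ℕ} {w : Fin n → Fin n → ℕ} (hsym : ∀ i j, w i j = w j i)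
    (hq : IsNSQ n 4 9 w) {a b c d : Fin n}
    (hab : a ≠ b) (hac : a ≠ c) (had : a ≠ d) (hbc : b ≠ c) (hbd : b ≠ d) (hcd : c ≠ d) :
    w a b + w a c + w a d + w b c + w b d + w c d ≤ 9 := by
  have hcard : ({a, b, c, d} : Finset (Fin n)).card = 4 := by
    rw [Finset.card_insert_of_notMem (by simp [hab, hac, had]),
      Finset.card_insert_of_notMem (by simp [hbc, hbd]),
      Finset.card_insert_of_notMem (by simp [hcd]), Finset.card_singleton]
  have h := hq {a, b, c, d} hcard
  rw [mgS_insert hsym (by simp [hab, hac, had]), mgS_insert hsym (by simp [hbc, hbd]),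
    mgS_insert hsym (by simp [hcd]), mgS_singleton,
    Finset.sum_insert (by simp [hbc, hbd]), Finset.sum_insert (by simp [hcd]),
    Finset.sum_singleton, Finset.sum_insert (by simp [hcd]), Finset.sum_singleton,
    Finset.sum_singleton] at h
  omega

lemma lb (n : ℕ) : ∃ w : Fin n → Fin n → ℕ, (∀ i j, w i j = w j i) ∧ IsNSQ n 4 9 w ∧
    2 ^ exC34 n = mgP n w univ := by
  obtain ⟨G, hGfree, hGcard⟩ := exC34_mem n
  letI := Classical.decRel G.Adj
  have hw : ∀ u v : Fin n, (if G.Adj u v then 2 else 1) = 1 + cnt (G.Adj u v) := by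
    intro u v
    by_cases h : G.Adj u v
    · rw [if_pos h, cnt_pos h]
    · rw [if_neg h, cnt_neg h]
  have hsym : ∀ i j : Fin n, (if G.Adj i j then 2 else 1) = (if G.Adj j i then 2 else 1) := by
    intro i j
    by_cases h : G.Adj i j
    · rw [if_pos h, if_pos (G.adj_symm h)]
    · rw [if_neg h, if_neg (fun hh => h (G.adj_symm hh))]
  refine ⟨fun i j => if G.Adj i j then 2 else 1, fun i j => hsym i j, ?_, ?_⟩
  · intro X hX
    obtain ⟨a, X1, haX1, rfl, hX1⟩ := Finset.card_eq_succ.mp hX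
    obtain ⟨b, X2, hbX2, rfl, hX2⟩ := Finset.card_eq_succ.mp hX1
    obtain ⟨c, X3, hcX3, rfl, hX3⟩ := Finset.card_eq_succ.mp hX2
    obtain ⟨d, rfl⟩ := Finset.card_eq_one.mp hX3
    have hab : a ≠ b := by simp only [Finset.mem_insert] at haX1; tauto
    have hac : a ≠ c := by simp only [Finset.mem_insert] at haX1; tauto
    have had : a ≠ d := by simp only [Finset.mem_insert, Finset.mem_singleton] at haX1; tauto
    have hbc : b ≠ c := by simp only [Finset.mem_insert] at hbX2; tauto
    have hbd : b ≠ d := by simp only [Finset.mem_insert, Finset.mem_singleton] at hbX2; tauto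
    have hcd : c ≠ d := by simp only [Finset.mem_singleton] at hcX3; tauto
    rw [mgS_insert hsym (by simp [hab, hac, had]), mgS_insert hsym (by simp [hbc, hbd]),
      mgS_insert hsym (by simp [hcd]), mgS_singleton,
      Finset.sum_insert (by simp [hbc, hbd]), Finset.sum_insert (by simp [hcd]),
      Finset.sum_singleton, Finset.sum_insert (by simp [hcd]), Finset.sum_singleton,
      Finset.sum_singleton]
    have hloc := loc34_of_free hGfree a b c d hab hac had hbc hbd hcd
    rw [hw a b, hw a c, hw a d, hw b c, hw b d, hw c d]
    omega
  · have hprod : mgP n (fun i j => if G.Adj i j then 2 else 1) univ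
        = 2 ^ ((pairs n univ).filter (fun p => G.Adj p.1 p.2)).card := by
      unfold mgP
      rw [← Finset.prod_filter_mul_prod_filter_not (pairs n univ) (fun p => G.Adj p.1 p.2)]
      have h1 : ∏ p ∈ (pairs n univ).filter (fun p => G.Adj p.1 p.2),
          (if G.Adj p.1 p.2 then 2 else 1) = 2 ^ ((pairs n univ).filter (fun p => G.Adj p.1 p.2)).card := by
        rw [Finset.prod_congr rfl (fun p hp => if_pos (Finset.mem_filter.mp hp).2),
          Finset.prod_const]
      have h2 : ∏ p ∈ (pairs n univ).filter (fun p => ¬G.Adj p.1 p.2),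
          (if G.Adj p.1 p.2 then 2 else 1) = 1 := by
        rw [Finset.prod_congr rfl (fun p hp => if_neg (Finset.mem_filter.mp hp).2)]
        exact Finset.prod_const_one
      rw [h1, h2, mul_one]
    rw [hprod, ← cntlem G, ← hGcard]

lemma cnt_two {x : ℕ} (h1 : 1 ≤ x) (h2 : x ≤ 2) : cnt (x = 2) = x - 1 := by
  by_cases h : x = 2
  · rw [cnt_pos h]; omega
  · rw [cnt_neg h]; omega

lemma prod_ite_two {α : Type*} (s : Finset α) (P : α → Prop) [DecidablePred P] :
    (∏ a ∈ s, (if P a then 2 else 1)) = 2 ^ (s.filter P).card := by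
  rw [← Finset.prod_filter_mul_prod_filter_not s P]
  have hh1 : ∏ a ∈ s.filter P, (if P a then 2 else 1) = 2 ^ (s.filter P).card := by
    rw [Finset.prod_congr rfl (fun a ha => if_pos (Finset.mem_filter.mp ha).2),
      Finset.prod_const]
  have hh2 : ∏ a ∈ s.filter (fun a => ¬P a), (if P a then 2 else 1) = 1 := by
    rw [Finset.prod_congr rfl (fun a ha => if_neg (Finset.mem_filter.mp ha).2)]
    exact Finset.prod_const_one
  rw [hh1, hh2, mul_one]

lemma pow_glue {c e d E : ℕ} (hc : c ≤ 2 ^ d) (he : e + d ≤ E) : c * 2 ^ e ≤ 2 ^ E := by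
  calc c * 2 ^ e ≤ 2 ^ d * 2 ^ e := Nat.mul_le_mul_right _ hc
    _ = 2 ^ (d + e) := (pow_add 2 d e).symm
    _ ≤ 2 ^ E := Nat.pow_le_pow_right (by omega) (by omega)

lemma card3_le {n : ℕ} (a b c : Fin n) : ({a, b, c} : Finset (Fin n)).card ≤ 3 := by
  apply le_trans (Finset.card_insert_le _ _)
  apply Nat.succ_le_succ
  apply le_trans (Finset.card_insert_le _ _)
  simp

/-- products over a clique-set with all multiplicities ≤ 2 are bounded by `2 ^ exT`. -/
lemma mgP_le_exT {n : ℕ} {w : Fin n → Fin n → ℕ} (hsym : ∀ i j, w i j = w j i)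
    (hq : IsNSQ n 4 9 w) (hone : ∀ u v : Fin n, u ≠ v → 1 ≤ w u v)
    (T : Finset (Fin n)) {k : ℕ} (hT : T.card = k)
    (h2 : ∀ u v : Fin n, u ∈ T → v ∈ T → u ≠ v → w u v ≤ 2) :
    mgP n w T ≤ 2 ^ exT k := by
  have hb : mgP n w T ≤ 2 ^ ((pairs n T).filter (fun p => w p.1 p.2 = 2)).card := by
    unfold mgP
    calc ∏ p ∈ pairs n T, w p.1 p.2
        ≤ ∏ p ∈ pairs n T, (if w p.1 p.2 = 2 then 2 else 1) := by
          apply Finset.prod_le_prod (fun _ _ => Nat.zero_le _)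
          intro p hp
          obtain ⟨hp1, hp2, hplt⟩ := mem_pairs.mp hp
          have hle := h2 _ _ hp1 hp2 (ne_of_lt hplt)
          split_ifs with h
          · omega
          · omega
      _ = 2 ^ ((pairs n T).filter (fun p => w p.1 p.2 = 2)).card := prod_ite_two _ _
  refine le_trans hb (Nat.pow_le_pow_right (by omega) ?_)
  apply card_transport T hT (fun u v => w u v = 2)
    (fun u v => by show w u v = 2 ↔ w v u = 2; rw [hsym u v])
  intro a b c d ha hb' hc hd hab hac had hbc hbd hcd
  show cnt (w a b = 2) + cnt (w a c = 2) + cnt (w a d = 2) + cnt (w b c = 2)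
    + cnt (w b d = 2) + cnt (w c d = 2) ≤ 3
  rw [cnt_two (hone a b hab) (h2 a b ha hb' hab), cnt_two (hone a c hac) (h2 a c ha hc hac),
    cnt_two (hone a d had) (h2 a d ha hd had), cnt_two (hone b c hbc) (h2 b c hb' hc hbc),
    cnt_two (hone b d hbd) (h2 b d hb' hd hbd), cnt_two (hone c d hcd) (h2 c d hc hd hcd)]
  have hs9 := sum9 hsym hq hab hac had hbc hbd hcd
  have o1 := hone a b hab
  have o2 := hone a c hac
  have o3 := hone a d had
  have o4 := hone b c hbc
  have o5 := hone b d hbd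
  have o6 := hone c d hcd
  omega

lemma ub (n : ℕ) (hn : 4 ≤ n) (w : Fin n → Fin n → ℕ) (hsym : ∀ i j, w i j = w j i)
    (hq : IsNSQ n 4 9 w) : mgP n w univ ≤ 2 ^ exC34 n := by
  by_cases h0 : ∃ p ∈ pairs n univ, w p.1 p.2 = 0
  · obtain ⟨p, hp, hp0⟩ := h0
    unfold mgP
    rw [Finset.prod_eq_zero hp hp0]
    exact Nat.zero_le _
  push_neg at h0
  have hone : ∀ u v : Fin n, u ≠ v → 1 ≤ w u v := by
    intro u v huv
    rcases lt_or_gt_of_ne huv with hlt | hgt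
    · have hz : w u v ≠ 0 := h0 (u, v) (mem_pairs.mpr ⟨mem_univ _, mem_univ _, hlt⟩)
      omega
    · have hz : w v u ≠ 0 := h0 (v, u) (mem_pairs.mpr ⟨mem_univ _, mem_univ _, hgt⟩)
      rw [hsym]
      omega
  have pick : ∀ s : Finset (Fin n), s.card < n → ∃ v, v ∉ s := by
    intro s hs
    by_contra hc
    push_neg at hc
    have hsub : (univ : Finset (Fin n)) ⊆ s := fun v _ => hc v
    have := Finset.card_le_card hsub
    rw [Finset.card_univ, Fintype.card_fin] at this
    omega
  rcases Nat.lt_or_ge n 5 with hn5 | hn5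
  · -- n = 4
    have hn4 : n = 4 := by omega
    subst hn4
    have hs := sum9 hsym hq (a := 0) (b := 1) (c := 2) (d := 3) (by decide) (by decide)
      (by decide) (by decide) (by decide) (by decide)
    have h6 := six_bound (hone 0 1 (by decide)) (hone 0 2 (by decide)) (hone 0 3 (by decide))
      (hone 1 2 (by decide)) (hone 1 3 (by decide)) (hone 2 3 (by decide)) hs
    have hle8 : mgP 4 w univ ≤ 8 := by
      have huniv : (univ : Finset (Fin 4)) = {0, 1, 2, 3} := by decide
      rw [huniv, mgP_insert hsym (by decide), mgP_insert hsym (by decide),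
        mgP_insert hsym (by decide), mgP_singleton,
        Finset.prod_insert (by decide), Finset.prod_insert (by decide), Finset.prod_singleton,
        Finset.prod_insert (by decide), Finset.prod_singleton, Finset.prod_singleton]
      refine le_trans (le_of_eq ?_) h6
      ring
    have hex : 3 ≤ exC34 4 := by
      have := exC34_ge_pred 4 (by omega)
      omega
    calc mgP 4 w univ ≤ 8 := hle8
      _ = 2 ^ 3 := rfl
      _ ≤ 2 ^ exC34 4 := Nat.pow_le_pow_right (by omega) hex
  · by_cases hM : ∀ u v : Fin n, u ≠ v → w u v ≤ 2
    · -- Case C : all multiplicities at most 2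
      have h := mgP_le_exT hsym hq hone univ (by rw [Finset.card_univ, Fintype.card_fin]) 
        (fun u v _ _ huv => hM u v huv)
      refine le_trans h (Nat.pow_le_pow_right (by omega) (exT_le n (by omega)))
    · push_neg at hM
      obtain ⟨x, y, hxyne, hw3⟩ := hM
      set S : Finset (Fin n) := univ \ {x, y} with hSdef
      have hmemS : ∀ u, u ∈ S ↔ u ≠ x ∧ u ≠ y := by
        intro u
        simp [hSdef, Finset.mem_sdiff, Finset.mem_insert]
      have hxS : x ∉ S := fun h => ((hmemS x).mp h).1 rfl
      have hyS : y ∉ S := fun h => ((hmemS y).mp h).2 rfl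
      have hcardS : S.card = n - 2 := by
        rw [hSdef, Finset.card_sdiff_of_subset (Finset.subset_univ _)]
        have h2 : ({x, y} : Finset (Fin n)).card = 2 := by
          rw [Finset.card_insert_of_notMem (by simp [hxyne]), Finset.card_singleton]
        rw [h2, Finset.card_univ, Fintype.card_fin]
      have hunivS : (univ : Finset (Fin n)) = insert x (insert y S) := by
        ext u
        simp only [mem_univ, true_iff, Finset.mem_insert, hmemS]
        by_cases hu1 : u = x
        · exact Or.inl hu1
        by_cases hu2 : u = y
        · exact Or.inr (Or.inl hu2)
        exact Or.inr (Or.inr ⟨hu1, hu2⟩)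
      have hxins : x ∉ insert y S := by
        simp only [Finset.mem_insert]
        push_neg
        exact ⟨hxyne, hxS⟩
      have hP : mgP n w univ = w x y * ((∏ u ∈ S, w x u * w y u) * mgP n w S) := by
        rw [hunivS, mgP_insert hsym hxins, mgP_insert hsym hyS, Finset.prod_insert hyS,
          Finset.prod_mul_distrib]
        ring
      have hkey : ∀ u ∈ S, w x y + w x u + w y u ≤ 6 := by
        intro u hu
        obtain ⟨hux, huy⟩ := (hmemS u).mp hu
        obtain ⟨v, hv⟩ := pick {x, y, u} (lt_of_le_of_lt (card3_le x y u) (by omega))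
        simp only [Finset.mem_insert, Finset.mem_singleton] at hv
        push_neg at hv
        obtain ⟨hvx, hvy, hvu⟩ := hv
        have hs := sum9 hsym hq hxyne hux.symm (Ne.symm hvx) huy.symm (Ne.symm hvy) (Ne.symm hvu)
        have b1 := hone x v (Ne.symm hvx)
        have b2 := hone y v (Ne.symm hvy)
        have b3 := hone u v (Ne.symm hvu)
        omega
      have h4 : w x y ≤ 4 := by
        obtain ⟨u, hu⟩ := pick {x, y} (by
          have : ({x, y} : Finset (Fin n)).card ≤ 2 := by
            apply le_trans (Finset.card_insert_le _ _)
            simp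
          omega)
        simp only [Finset.mem_insert, Finset.mem_singleton] at hu
        push_neg at hu
        have huS : u ∈ S := (hmemS u).mpr hu
        have := hkey u huS
        have := hone x u (Ne.symm hu.1)
        have := hone y u (Ne.symm hu.2)
        omega
      have hS2 : ∀ u v : Fin n, u ∈ S → v ∈ S → u ≠ v → w u v ≤ 2 := by
        intro u v hu hv huv
        obtain ⟨hux, huy⟩ := (hmemS u).mp hu
        obtain ⟨hvx, hvy⟩ := (hmemS v).mp hv
        have hs := sum9 hsym hq hxyne hux.symm hvx.symm huy.symm hvy.symm huv
        have b1 := hone x u hux.symm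
        have b2 := hone y u huy.symm
        have b3 := hone x v hvx.symm
        have b4 := hone y v hvy.symm
        omega
      have hcase : w x y = 3 ∨ w x y = 4 := by omega
      rcases hcase with hx3 | hx4
      · -- w x y = 3
        by_cases hex : ∃ u₀ ∈ S, w x u₀ + w y u₀ = 3
        · obtain ⟨u₀, hu₀S, hu₀⟩ := hex
          obtain ⟨hu₀x, hu₀y⟩ := (hmemS u₀).mp hu₀S
          have huniq : ∀ u ∈ S, u ≠ u₀ → w x u = 1 ∧ w y u = 1 ∧ w u₀ u = 1 := by
            intro u hu hne
            obtain ⟨hux, huy⟩ := (hmemS u).mp hu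
            have hs := sum9 hsym hq hxyne hu₀x.symm hux.symm hu₀y.symm huy.symm (Ne.symm hne)
            have b1 := hone x u hux.symm
            have b2 := hone y u huy.symm
            have b3 := hone u₀ u (Ne.symm hne)
            refine ⟨by omega, by omega, by omega⟩
          have hprodS : ∏ u ∈ S, w x u * w y u = w x u₀ * w y u₀ := by
            apply Finset.prod_eq_single u₀
            · intro u hu hne
              rw [(huniq u hu hne).1, (huniq u hu hne).2.1]
              ring
            · intro h
              exact absurd hu₀S h
          have hu₀le : w x u₀ * w y u₀ ≤ 2 := by
            have a1 := hone x u₀ hu₀x.symm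
            have a2 := hone y u₀ hu₀y.symm
            have hc : w x u₀ = 1 ∨ w x u₀ = 2 := by omega
            rcases hc with h | h <;> rw [h] <;> omega
          set S' : Finset (Fin n) := S.erase u₀ with hS'def
          have hS'card : S'.card = n - 3 := by
            rw [hS'def, Finset.card_erase_of_mem hu₀S, hcardS]
            omega
          have hu₀S' : u₀ ∉ S' := Finset.notMem_erase _ _
          have hSins : S = insert u₀ S' := (Finset.insert_erase hu₀S).symm
          have hPS : mgP n w S = mgP n w S' := by
            rw [hSins, mgP_insert hsym hu₀S']
            have hones : ∏ v ∈ S', w u₀ v = 1 :=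
              Finset.prod_eq_one (fun v hv =>
                (huniq v (Finset.mem_of_mem_erase hv) (Finset.ne_of_mem_erase hv)).2.2)
            rw [hones, one_mul]
          have hPS' : mgP n w S' ≤ 2 ^ exT (n - 3) :=
            mgP_le_exT hsym hq hone S' hS'card
              (fun u v hu hv huv => hS2 u v (Finset.mem_of_mem_erase hu)
                (Finset.mem_of_mem_erase hv) huv)
          have hbase : mgP n w univ ≤ 6 * 2 ^ exT (n - 3) := by
            rw [hP, hx3, hprodS, hPS]
            calc 3 * (w x u₀ * w y u₀ * mgP n w S')
                ≤ 3 * (2 * (2 ^ exT (n - 3))) := by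
                  apply Nat.mul_le_mul_left
                  exact Nat.mul_le_mul hu₀le hPS'
              _ = 6 * 2 ^ exT (n - 3) := by ring
          have hfin : n = 5 ∨ n = 6 ∨ 7 ≤ n := by omega
          rcases hfin with rfl | rfl | h7
          · have hT2 : exT 2 ≤ 1 := by
              have := exT_le_pairs 2
              have hpc : (pairs 2 univ).card = 1 := by decide
              omega
            have hx : 4 ≤ exC34 5 := by
              have := exC34_ge_pred 5 (by omega)
              omega
            rw [show (5 : ℕ) - 3 = 2 from rfl] at hbase
            calc mgP 5 w univ ≤ 6 * 2 ^ exT 2 := hbase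
              _ ≤ 6 * 2 ^ 1 := Nat.mul_le_mul_left _ (Nat.pow_le_pow_right (by omega) hT2)
              _ ≤ 2 ^ 4 := by norm_num
              _ ≤ 2 ^ exC34 5 := Nat.pow_le_pow_right (by omega) hx
          · have hT3 : exT 3 ≤ 3 := by
              have := exT_le_pairs 3
              have hpc : (pairs 3 univ).card = 3 := by decide
              omega
            have hx : 6 ≤ exC34 6 := exC34_6
            rw [show (6 : ℕ) - 3 = 3 from rfl] at hbase
            calc mgP 6 w univ ≤ 6 * 2 ^ exT 3 := hbase
              _ ≤ 6 * 2 ^ 3 := Nat.mul_le_mul_left _ (Nat.pow_le_pow_right (by omega) hT3)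
              _ ≤ 2 ^ 6 := by norm_num
              _ ≤ 2 ^ exC34 6 := Nat.pow_le_pow_right (by omega) hx
          · have hTe : exT (n - 3) ≤ exC34 (n - 3) := exT_le (n - 3) (by omega)
            have hadd := exC34_add (n - 3) (by omega) 3
            rw [show n - 3 + 3 = n by omega] at hadd
            refine le_trans hbase ?_
            refine le_trans (Nat.mul_le_mul_left _
              (Nat.pow_le_pow_right (by omega) hTe)) ?_
            apply pow_glue (c := 6) (d := 3)
            · norm_num
            · omega
        · push_neg at hex
          have hall : ∀ u ∈ S, w x u = 1 ∧ w y u = 1 := by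
            intro u hu
            obtain ⟨hux, huy⟩ := (hmemS u).mp hu
            have hk := hkey u hu
            have hne3 := hex u hu
            have b1 := hone x u hux.symm
            have b2 := hone y u huy.symm
            constructor <;> omega
          have hprodS : ∏ u ∈ S, w x u * w y u = 1 :=
            Finset.prod_eq_one (fun u hu => by rw [(hall u hu).1, (hall u hu).2]; ring)
          have hPS : mgP n w S ≤ 2 ^ exT (n - 2) :=
            mgP_le_exT hsym hq hone S hcardS hS2
          have hbase : mgP n w univ ≤ 3 * 2 ^ exT (n - 2) := by
            rw [hP, hx3, hprodS, one_mul]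
            exact Nat.mul_le_mul_left _ hPS
          have hfin : n = 5 ∨ 6 ≤ n := by omega
          rcases hfin with rfl | h6
          · have hT3 : exT 3 ≤ 3 := by
              have := exT_le_pairs 3
              have hpc : (pairs 3 univ).card = 3 := by decide
              omega
            have hx : 5 ≤ exC34 5 := exC34_5
            rw [show (5 : ℕ) - 2 = 3 from rfl] at hbase
            calc mgP 5 w univ ≤ 3 * 2 ^ exT 3 := hbase
              _ ≤ 3 * 2 ^ 3 := Nat.mul_le_mul_left _ (Nat.pow_le_pow_right (by omega) hT3)
              _ ≤ 2 ^ 5 := by norm_num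
              _ ≤ 2 ^ exC34 5 := Nat.pow_le_pow_right (by omega) hx
          · have hTe : exT (n - 2) ≤ exC34 (n - 2) := exT_le (n - 2) (by omega)
            have hadd := exC34_add (n - 2) (by omega) 2
            rw [show n - 2 + 2 = n by omega] at hadd
            refine le_trans hbase ?_
            refine le_trans (Nat.mul_le_mul_left _
              (Nat.pow_le_pow_right (by omega) hTe)) ?_
            apply pow_glue (c := 3) (d := 2)
            · norm_num
            · omega
      · -- w x y = 4
        have hall : ∀ u ∈ S, w x u = 1 ∧ w y u = 1 := by
          intro u hu
          obtain ⟨hux, huy⟩ := (hmemS u).mp hu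
          have hk := hkey u hu
          have b1 := hone x u hux.symm
          have b2 := hone y u huy.symm
          constructor <;> omega
        have hprodS : ∏ u ∈ S, w x u * w y u = 1 :=
          Finset.prod_eq_one (fun u hu => by rw [(hall u hu).1, (hall u hu).2]; ring)
        have hPS : mgP n w S = 1 := by
          unfold mgP
          apply Finset.prod_eq_one
          intro p hp
          obtain ⟨hp1, hp2, hplt⟩ := mem_pairs.mp hp
          obtain ⟨h1x, h1y⟩ := (hmemS p.1).mp hp1
          obtain ⟨h2x, h2y⟩ := (hmemS p.2).mp hp2
          have hs := sum9 hsym hq hxyne h1x.symm h2x.symm h1y.symm h2y.symm (ne_of_lt hplt)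
          have b1 := hone x p.1 h1x.symm
          have b2 := hone y p.1 h1y.symm
          have b3 := hone x p.2 h2x.symm
          have b4 := hone y p.2 h2y.symm
          have b5 := hone p.1 p.2 (ne_of_lt hplt)
          omega
        rw [hP, hx4, hprodS, hPS]
        have hx : 2 ≤ exC34 n := by
          have := exC34_ge_pred n (by omega)
          omega
        calc 4 * (1 * 1) = 2 ^ 2 := by norm_num
          _ ≤ 2 ^ exC34 n := Nat.pow_le_pow_right (by omega) hx

end Aux

theorem exPi_449_eq (n : ℕ) (hn : 4 ≤ n) :
    IsGreatest {m : ℕ | ∃ w : Fin n → Fin n → ℕ,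
        (∀ i j, w i j = w j i) ∧ IsNSQ n 4 9 w ∧ m = mgP n w Finset.univ}
      (2 ^ exC34 n) := by
  constructor
  · obtain ⟨w, h1, h2, h3⟩ := Aux.lb n
    exact ⟨w, h1, h2, h3⟩
  · rintro m ⟨w, h1, h2, rfl⟩
    exact Aux.ub n hn w h1 h2
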